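/- Let f : ℝⁿ → ℝ be bounded from below, let δ ∈ (0,1), μ > 0 and γ_min > 0. Let (x^k)_{k∈ℕ} ⊂ ℝⁿ and, for each k, let H_k be a symmetric real n×n matrix with ⟨H_k v, v⟩ ≥ μ‖v‖² for all v, let γ_k ≥ γ_min, and let m_k : ℝⁿ → ℝ satisfy m_k(x^k) = f(x^k). Suppose that for every k, x^{k+1} is a global minimizer of x ↦ m_k(x) + (γ_k/2)‖x−x^k‖²_{H_k} and |f(x^{k+1}) − m_k(x^{k+1})| ≤ δ·(γ_k/2)·‖x^{k+1}−x^k‖²_{H_k}. Then the sequence (f(x^k))_{k∈ℕ} is nonincreasing, γ_k·‖x^{k+1}−x^k‖²_{H_k} → 0 as k → ∞, and ‖x^{k+1}−x^k‖ → 0 as k → ∞. -/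

import Mathlib

open Matrix Filter

/-- The seminorm induced by a symmetric positive semidefinite matrix `H`:
`‖v‖_H = √⟨Hv, v⟩`. -/
noncomputable def hNorm {n : ℕ} (H : Matrix (Fin n) (Fin n) ℝ)
    (v : EuclideanSpace ℝ (Fin n)) : ℝ :=
  Real.sqrt ((H.mulVec v) ⬝ᵥ v)

theorem stmt1 {n : ℕ} (f : EuclideanSpace ℝ (Fin n) → ℝ)
    (hbdd : BddBelow (Set.range f))
    (δ μ γmin : ℝ) (hδ : δ ∈ Set.Ioo (0 : ℝ) 1) (hμ : 0 < μ) (hγmin : 0 < γmin)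
    (x : ℕ → EuclideanSpace ℝ (Fin n))
    (H : ℕ → Matrix (Fin n) (Fin n) ℝ)
    (hHsymm : ∀ k, (H k).IsSymm)
    (hHμ : ∀ k (v : EuclideanSpace ℝ (Fin n)), μ * ‖v‖ ^ 2 ≤ ((H k).mulVec v) ⬝ᵥ v)
    (γ : ℕ → ℝ) (hγ : ∀ k, γmin ≤ γ k)
    (m : ℕ → EuclideanSpace ℝ (Fin n) → ℝ)
    (hcenter : ∀ k, m k (x k) = f (x k))
    (hmin : ∀ k y, m k (x (k + 1)) + γ k / 2 * (hNorm (H k) (x (k + 1) - x k)) ^ 2 ≤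
      m k y + γ k / 2 * (hNorm (H k) (y - x k)) ^ 2)
    (haccept : ∀ k, |f (x (k + 1)) - m k (x (k + 1))| ≤
      δ * (γ k / 2) * (hNorm (H k) (x (k + 1) - x k)) ^ 2) :
    (Antitone fun k => f (x k)) ∧
      Tendsto (fun k => γ k * (hNorm (H k) (x (k + 1) - x k)) ^ 2) atTop (nhds 0) ∧
      Tendsto (fun k => ‖x (k + 1) - x k‖) atTop (nhds 0) := by
  obtain ⟨hδ0, hδ1⟩ := hδ
  set q : ℕ → ℝ := fun k => (hNorm (H k) (x (k + 1) - x k)) ^ 2 with hqdef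
  have hq_eq : ∀ k, q k = ((H k).mulVec (x (k+1) - x k)) ⬝ᵥ (x (k+1) - x k) := by
    intro k
    have h0 : (0:ℝ) ≤ ((H k).mulVec (x (k+1) - x k)) ⬝ᵥ (x (k+1) - x k) :=
      le_trans (by positivity) (hHμ k _)
    simp only [hqdef, hNorm, WithLp.ofLp_sub]; exact Real.sq_sqrt h0
  have hq_nonneg : ∀ k, 0 ≤ q k := fun k => sq_nonneg _
  have hγpos : ∀ k, 0 < γ k := fun k => lt_of_lt_of_le hγmin (hγ k)
  -- key descent inequality
  have hkey : ∀ k, f (x (k+1)) + (1-δ) * (γ k / 2 * q k) ≤ f (x k) := by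
    intro k
    have h1 := hmin k (x k)
    have h0 : hNorm (H k) (x k - x k) = 0 := by
      simp [hNorm, sub_self]
    rw [h0, hcenter k] at h1
    have h2 := le_of_abs_le (haccept k)
    have heq : δ * (γ k / 2) * q k = δ * (γ k / 2 * q k) := by ring
    rw [heq] at h2
    have hn : δ * (γ k / 2 * q k) ≤ γ k / 2 * q k := by
      have hnn : 0 ≤ γ k / 2 * q k := by
        have := hγpos k; have := hq_nonneg k; positivity
      nlinarith
    simp only [ne_eq, OfNat.ofNat_ne_zero, not_false_eq_true, zero_pow, mul_zero,
      add_zero] at h1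
    have h1' : m k (x (k + 1)) + γ k / 2 * q k ≤ f (x k) := h1
    nlinarith
  have hanti : Antitone fun k => f (x k) := by
    apply antitone_nat_of_succ_le
    intro k
    have hnn : 0 ≤ (1-δ) * (γ k / 2 * q k) := by
      have := hγpos k; have := hq_nonneg k
      have : 0 ≤ γ k / 2 * q k := by positivity
      nlinarith
    linarith [hkey k]
  have hbdd' : BddBelow (Set.range fun k => f (x k)) := by
    obtain ⟨c, hc⟩ := hbdd
    exact ⟨c, by rintro y ⟨k, rfl⟩; exact hc ⟨x k, rfl⟩⟩
  have hconv : Tendsto (fun k => f (x k)) atTop (nhds (⨅ k, f (x k))) :=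
    tendsto_atTop_ciInf hanti hbdd'
  have hconv' : Tendsto (fun k => f (x (k+1))) atTop (nhds (⨅ k, f (x k))) :=
    hconv.comp (tendsto_add_atTop_nat 1)
  have hdiff : Tendsto (fun k => f (x k) - f (x (k+1))) atTop (nhds 0) := by
    have := hconv.sub hconv'
    simpa using this
  have hγq : Tendsto (fun k => γ k * q k) atTop (nhds 0) := by
    have hc : (0:ℝ) < 1 - δ := by linarith
    have hbound : ∀ k, γ k * q k ≤ (2/(1-δ)) * (f (x k) - f (x (k+1))) := by
      intro k
      have h1 : (1-δ) * (γ k / 2 * q k) ≤ f (x k) - f (x (k+1)) := by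
        linarith [hkey k]
      have h2 := mul_le_mul_of_nonneg_left h1
        (le_of_lt (by positivity : (0:ℝ) < 2/(1-δ)))
      have heq : 2/(1-δ) * ((1-δ) * (γ k / 2 * q k)) = γ k * q k := by
        field_simp
      linarith [heq ▸ h2]
    have hlim : Tendsto (fun k => (2/(1-δ)) * (f (x k) - f (x (k+1)))) atTop (nhds 0) := by
      have := hdiff.const_mul (2/(1-δ))
      simpa using this
    refine squeeze_zero (fun k => ?_) hbound hlim
    exact mul_nonneg (le_of_lt (hγpos k)) (hq_nonneg k)
  refine ⟨hanti, hγq, ?_⟩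
  have hsq : Tendsto (fun k => ‖x (k+1) - x k‖ ^ 2) atTop (nhds 0) := by
    have hbound : ∀ k, ‖x (k+1) - x k‖ ^ 2 ≤ (1/(γmin * μ)) * (γ k * q k) := by
      intro k
      have h1 : μ * ‖x (k+1) - x k‖ ^ 2 ≤ q k := by
        rw [hq_eq k]; exact hHμ k _
      have h2 : γmin * (μ * ‖x (k+1) - x k‖ ^ 2) ≤ γ k * q k := by
        have hq0 := hq_nonneg k
        nlinarith [hγ k, hγpos k, sq_nonneg ‖x (k+1) - x k‖]
      have hpos : (0:ℝ) < γmin * μ := by positivity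
      rw [one_div, inv_mul_eq_div, le_div_iff₀ hpos]
      nlinarith [h2]
    have hlim : Tendsto (fun k => (1/(γmin * μ)) * (γ k * q k)) atTop (nhds 0) := by
      have := hγq.const_mul (1/(γmin * μ))
      simpa using this
    exact squeeze_zero (fun k => sq_nonneg _) hbound hlim
  have hcomp : Tendsto (fun k => Real.sqrt (‖x (k+1) - x k‖ ^ 2)) atTop (nhds 0) := by
    have := (Real.continuous_sqrt.tendsto 0).comp hsq
    simpa [Function.comp_def] using this
  have heq : (fun k => Real.sqrt (‖x (k+1) - x k‖ ^ 2)) = fun k => ‖x (k+1) - x k‖ := by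
    funext k; exact Real.sqrt_sq (norm_nonneg _)
  rwa [heq] at hcomp
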